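/- Let n ≥ 1. The matrix r_{n+1} is invertible and its inverse equals (1/2^n) · r_{n+1}^T; equivalently, r_{n+1} · r_{n+1}^T = 2^n · I, where I is the 2^n × 2^n identity matrix. -/

import Mathlib

open Matrix

noncomputable section

/-- Kronecker product of square matrices with flat `Fin` indexing
(first factor most significant: `(A ⊗ B)[i*b+r, j*b+s] = A[i,j] * B[r,s]`). -/
def kron {R : Type*} [Mul R] {a b : ℕ} (A : Matrix (Fin a) (Fin a) R)
    (B : Matrix (Fin b) (Fin b) R) : Matrix (Fin (a * b)) (Fin (a * b)) R := fun i j =>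
  have hb : 0 < b := Nat.pos_of_ne_zero fun hb0 => by
    subst hb0; exact absurd i.isLt (by omega)
  A ⟨i.val / b, Nat.div_lt_of_lt_mul (Nat.mul_comm a b ▸ i.isLt)⟩
    ⟨j.val / b, Nat.div_lt_of_lt_mul (Nat.mul_comm a b ▸ j.isLt)⟩ *
  B ⟨i.val % b, Nat.mod_lt _ hb⟩ ⟨j.val % b, Nat.mod_lt _ hb⟩

/-- Kronecker product of (column) vectors with flat `Fin` indexing. -/
def kronV {R : Type*} [Mul R] {a b : ℕ} (u : Fin a → R) (v : Fin b → R) :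
    Fin (a * b) → R := fun i =>
  have hb : 0 < b := Nat.pos_of_ne_zero fun hb0 => by
    subst hb0; exact absurd i.isLt (by omega)
  u ⟨i.val / b, Nat.div_lt_of_lt_mul (Nat.mul_comm a b ▸ i.isLt)⟩ *
  v ⟨i.val % b, Nat.mod_lt _ hb⟩

/-- Transport a square matrix along an equality of sizes. -/
def castM {R : Type*} {a b : ℕ} (h : a = b) (A : Matrix (Fin a) (Fin a) R) :
    Matrix (Fin b) (Fin b) R := fun i j => A (Fin.cast h.symm i) (Fin.cast h.symm j)

/-- Transport a vector along an equality of sizes. -/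
def castV {R : Type*} {a b : ℕ} (h : a = b) (u : Fin a → R) : Fin b → R :=
  fun i => u (Fin.cast h.symm i)

theorem two_pow_pred_mul_two {n : ℕ} (hn : 1 ≤ n) : 2 ^ (n - 1) * 2 = 2 ^ n := by
  rw [← pow_succ]; congr 1; omega

theorem half_lt {n x : ℕ} (hx : x < 2 ^ n) : x / 2 < 2 ^ (n - 1) := by
  rcases Nat.eq_zero_or_pos n with h | h
  · subst h; simp only [pow_zero] at hx ⊢; omega
  · have h2 : (2 : ℕ) ^ (n - 1) * 2 = 2 ^ n := two_pow_pred_mul_two h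
    omega

/-- `⌊j/2⌋` as an element of `Fin (2^(n-1))`. -/
def half {n : ℕ} (j : Fin (2 ^ n)) : Fin (2 ^ (n - 1)) := ⟨j.val / 2, half_lt j.isLt⟩

/-- The index `2i` (1-indexed: `2i-1`). -/
def dbl {n : ℕ} (hn : 1 ≤ n) (i : Fin (2 ^ (n - 1))) : Fin (2 ^ n) :=
  ⟨2 * i.val, by
    have h1 := i.isLt
    have h2 : (2 : ℕ) ^ (n - 1) * 2 = 2 ^ n := two_pow_pred_mul_two hn
    omega⟩

/-- The index `2i+1` (1-indexed: `2i`). -/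
def dbl1 {n : ℕ} (hn : 1 ≤ n) (i : Fin (2 ^ (n - 1))) : Fin (2 ^ n) :=
  ⟨2 * i.val + 1, by
    have h1 := i.isLt
    have h2 : (2 : ℕ) ^ (n - 1) * 2 = 2 ^ n := two_pow_pred_mul_two hn
    omega⟩

/-- The identity matrix `I_m` over `ℂ`. -/
def idM (m : ℕ) : Matrix (Fin m) (Fin m) ℂ := 1

/-- The 2×2 identity matrix `I_2`. -/
def I2 : Matrix (Fin 2) (Fin 2) ℂ := 1

/-- The Pauli matrix `X = [[0,1],[1,0]]`. -/
def pauliX : Matrix (Fin 2) (Fin 2) ℂ := !![0, 1; 1, 0]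

/-- The projector `π₀ = [[1,0],[0,0]]`. -/
def proj0 : Matrix (Fin 2) (Fin 2) ℂ := !![1, 0; 0, 0]

/-- The projector `π₁ = [[0,0],[0,1]]`. -/
def proj1 : Matrix (Fin 2) (Fin 2) ℂ := !![0, 0; 0, 1]

/-- `D₁(φ) = diag(e^{iφ}, e^{-iφ})`. -/
def D1 (φ : ℝ) : Matrix (Fin 2) (Fin 2) ℂ :=
  !![Complex.exp (Complex.I * (φ : ℂ)), 0; 0, Complex.exp (-(Complex.I * (φ : ℂ)))]

/-- `D_m(α) = diag(e^{iα₁}, …, e^{iα_{2^m}})`. -/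
def Dm (m : ℕ) (α : Fin (2 ^ m) → ℝ) : Matrix (Fin (2 ^ m)) (Fin (2 ^ m)) ℂ :=
  Matrix.diagonal fun j => Complex.exp (Complex.I * (α j : ℂ))

/-- The control matrix
`L(k) = I^{⊗(k-1)} ⊗ π₀ ⊗ I^{⊗(n-k)} + I^{⊗(k-1)} ⊗ π₁ ⊗ I^{⊗(n-k-1)} ⊗ X`
(defined to be the identity for `k` outside `{1,…,n-1}`). -/
def Lmat (n k : ℕ) : Matrix (Fin (2 ^ n)) (Fin (2 ^ n)) ℂ :=
  if h : 1 ≤ k ∧ k < n then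
    castM (by rw [← pow_succ, ← pow_add]; congr 1; omega)
      (kron (kron (idM (2 ^ (k - 1))) proj0) (idM (2 ^ (n - k)))) +
    castM (by rw [← pow_succ, ← pow_add, ← pow_succ]; congr 1; omega)
      (kron (kron (kron (idM (2 ^ (k - 1))) proj1) (idM (2 ^ (n - k - 1)))) pauliX)
  else 1

/-- The half of the binary-tree sequence: `a_2 = (1)`,
`a_m = (a_{m-1}+1) ∘ (1) ∘ (a_{m-1}+1)`. -/
def aSeq : ℕ → List ℕ
  | 0 => []
  | 1 => []
  | 2 => [1]
  | n + 3 => ((aSeq (n + 2)).map (· + 1)) ++ [1] ++ ((aSeq (n + 2)).map (· + 1))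

/-- The binary-tree sequence `A_n = a_n ∘ (1)`. -/
def ASeq (n : ℕ) : List ℕ := aSeq n ++ [1]

/-- The all-ones vector `[1,1]^{⊗k}` (of arbitrary length). -/
def onesV (m : ℕ) : Fin m → ℝ := fun _ => 1

/-- The vector `[1,-1]`. -/
def signV : Fin 2 → ℝ := ![1, -1]

/-- `v_m = [1,1]^{⊗(m-1)} ⊗ [1,-1] ⊗ [1,1]^{⊗(n-1-m)}`
(defined to be all-ones for `m` outside `{1,…,n-1}`). -/
def vvec (n m : ℕ) : Fin (2 ^ (n - 1)) → ℝ :=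
  if h : 1 ≤ m ∧ m ≤ n - 1 then
    castV (by rw [← pow_succ, ← pow_add]; congr 1; omega)
      (kronV (kronV (onesV (2 ^ (m - 1))) signV) (onesV (2 ^ (n - 1 - m))))
  else onesV _

/-- The matrix `r_n`: its `i`-th column is the entrywise product
`∏_{k=1}^{i-1} v_{A_n(k)}`.  (`rMat n j i` is the `(j,i)` entry, `i` the column.) -/
def rMat (n : ℕ) : Matrix (Fin (2 ^ (n - 1))) (Fin (2 ^ (n - 1))) ℝ :=
  fun j i => ∏ k ∈ Finset.range i.val, vvec n ((ASeq n).getD k 1) j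

/-- `r_2 = [[1,1],[1,-1]]`. -/
def r2 : Matrix (Fin 2) (Fin 2) ℝ := !![1, 1; 1, -1]

/-- The `m`-fold Kronecker power `r_2^{⊗m}`. -/
def r2pow : (m : ℕ) → Matrix (Fin (2 ^ m)) (Fin (2 ^ m)) ℝ
  | 0 => 1
  | m + 1 => castM (pow_succ 2 m).symm (kron (r2pow m) r2)

/-- The block-diagonal matrix with 2×2 blocks `D₁(γ₁), …, D₁(γ_{2^{n-1}})`. -/
def blockD1 (n : ℕ) (γ : Fin (2 ^ (n - 1)) → ℝ) :
    Matrix (Fin (2 ^ n)) (Fin (2 ^ n)) ℂ := fun x y =>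
  if x.val / 2 = y.val / 2 then
    D1 (γ (half x)) ⟨x.val % 2, Nat.mod_lt _ (by norm_num)⟩
      ⟨y.val % 2, Nat.mod_lt _ (by norm_num)⟩
  else 0


/-- trailing zeros -/
def tz : ℕ → ℕ
  | 0 => 0
  | (m+1) => if (m+1) % 2 = 0 then tz ((m+1)/2) + 1 else 0
  decreasing_by exact Nat.div_lt_self (Nat.succ_pos m) one_lt_two

theorem tz_odd {m : ℕ} (h : m % 2 = 1) : tz m = 0 := by
  cases m with
  | zero => simp at h
  | succ k => rw [tz]; simp [h]

theorem tz_even {m : ℕ} (h : m % 2 = 0) (h0 : m ≠ 0) : tz m = tz (m / 2) + 1 := by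
  cases m with
  | zero => simp at h0
  | succ k => rw [tz]; simp [h]

theorem tz_two_pow (n : ℕ) : tz (2 ^ n) = n := by
  induction n with
  | zero => exact tz_odd rfl
  | succ k ih =>
    rw [tz_even (by simp [pow_succ, Nat.mul_mod_left]) (by positivity)]
    rw [pow_succ, Nat.mul_div_cancel _ (by norm_num), ih]

theorem tz_lt {m n : ℕ} (h1 : 1 ≤ m) (h2 : m < 2 ^ n) : tz m < n := by
  induction m using Nat.strong_induction_on generalizing n with
  | _ m ih =>
    rcases Nat.even_or_odd m with he | ho
    · have hm0 : m ≠ 0 := by omega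
      have h2' : m % 2 = 0 := Nat.even_iff.mp he
      rw [tz_even h2' hm0]
      have hn : 1 ≤ n := by
        by_contra hc
        interval_cases n <;> omega
      have hp : 2 ^ n = 2 ^ (n-1) * 2 := by rw [← pow_succ]; congr 1; omega
      have := ih (m / 2) (by omega) (n := n - 1) (by omega) (by omega)
      omega
    · rw [tz_odd (Nat.odd_iff.mp ho)]
      by_contra hc
      push_neg at hc
      interval_cases n
      omega

theorem tz_two_pow_add {n j : ℕ} (h1 : 1 ≤ j) (h2 : j < 2 ^ n) : tz (2 ^ n + j) = tz j := by
  induction j using Nat.strong_induction_on generalizing n with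
  | _ j ih =>
    rcases Nat.even_or_odd j with he | ho
    · have h2' : j % 2 = 0 := Nat.even_iff.mp he
      have hn : 1 ≤ n := by by_contra hc; interval_cases n <;> omega
      have hsum : (2 ^ n + j) % 2 = 0 := by
        have : 2 ^ n % 2 = 0 := by
          have : (2:ℕ) ∣ 2 ^ n := dvd_pow_self 2 (by omega)
          omega
        omega
      rw [tz_even hsum (by positivity), tz_even h2' (by omega)]
      have hd : (2 ^ n + j) / 2 = 2 ^ (n-1) + j / 2 := by
        have : 2 ^ n = 2 ^ (n-1) * 2 := by rw [← pow_succ]; congr 1; omega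
        omega
      rw [hd, ih (j/2) (by omega) (by omega) (by
        have : 2 ^ n = 2 ^ (n-1) * 2 := by rw [← pow_succ]; congr 1; omega
        omega)]
    · have hj : j % 2 = 1 := Nat.odd_iff.mp ho
      have hn : 1 ≤ n := by by_contra hc; interval_cases n <;> omega
      have : (2 ^ n + j) % 2 = 1 := by
        have : 2 ^ n % 2 = 0 := by
          have : (2:ℕ) ∣ 2 ^ n := dvd_pow_self 2 (by omega)
          omega
        omega
      rw [tz_odd this, tz_odd hj]

/-- Gray code -/
def gc (k : ℕ) : ℕ := k ^^^ (k / 2)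

theorem xor_div_two (a b : ℕ) : (a ^^^ b) / 2 = a / 2 ^^^ b / 2 := by
  apply Nat.eq_of_testBit_eq
  intro i
  simp only [Nat.testBit_xor, ← Nat.testBit_succ]

theorem xor_bits {a b r s : ℕ} (hr : r < 2) (hs : s < 2) :
    (2 * a + r) ^^^ (2 * b + s) = 2 * (a ^^^ b) + (r ^^^ s) := by
  apply Nat.eq_of_testBit_eq
  intro i
  cases i with
  | zero =>
    rw [Nat.testBit_xor]
    simp only [Nat.testBit_zero, Nat.mul_add_mod]
    interval_cases r <;> interval_cases s <;> simp
  | succ j =>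
    rw [Nat.testBit_xor]
    simp only [Nat.testBit_succ, Nat.mul_add_div (show 0 < 2 by norm_num)]
    have h1 : r / 2 = 0 := by omega
    have h2 : s / 2 = 0 := by omega
    have h3 : (r ^^^ s) / 2 = 0 := by interval_cases r <;> interval_cases s <;> rfl
    rw [h1, h2, h3, Nat.add_zero, Nat.add_zero, Nat.add_zero, Nat.testBit_xor]
theorem xor_succ (k : ℕ) : k ^^^ (k + 1) = 2 ^ (tz (k + 1) + 1) - 1 := by
  induction k using Nat.strong_induction_on with
  | _ k ih =>
    rcases Nat.even_or_odd k with ⟨m, hm⟩ | ho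
    · have hk : k = 2 * m := by omega
      subst hk
      have ht : tz (2 * m + 1) = 0 := tz_odd (by omega)
      have xb := xor_bits (a := m) (b := m) (r := 0) (s := 1) (by norm_num) (by norm_num)
      rw [ht]
      simp only [Nat.add_zero] at xb
      rw [xb]
      simp
    · obtain ⟨m, hm⟩ := ho
      subst hm
      have ht : tz (2 * m + 1 + 1) = tz (m + 1) + 1 := by
        rw [show 2 * m + 1 + 1 = 2 * (m + 1) by omega,
          tz_even (by omega) (by omega), Nat.mul_div_cancel_left _ (by norm_num)]
      have ihh := ih m (by omega)
      have xb := xor_bits (a := m) (b := m + 1) (r := 1) (s := 0) (by norm_num) (by norm_num)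
      rw [show 2 * (m + 1) + 0 = 2 * m + 1 + 1 by omega] at xb
      rw [ht, xb, ihh]
      have : (1 : ℕ) ^^^ 0 = 1 := rfl
      rw [this]
      have hp : 1 ≤ 2 ^ (tz (m + 1) + 1) := Nat.one_le_two_pow
      have hq : 2 ^ (tz (m + 1) + 1 + 1) = 2 * 2 ^ (tz (m + 1) + 1) := by
        rw [pow_succ]; ring
      omega

theorem pow_sub_one_xor (t : ℕ) : (2 ^ (t + 1) - 1) ^^^ (2 ^ t - 1) = 2 ^ t := by
  apply Nat.eq_of_testBit_eq
  intro i
  rw [Nat.testBit_xor, Nat.testBit_two_pow_sub_one, Nat.testBit_two_pow_sub_one,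
    Nat.testBit_two_pow]
  rcases lt_trichotomy i t with h | h | h
  · simp [h, Nat.lt_succ_of_lt h, Nat.ne_of_gt h]
  · simp [h, Nat.lt_irrefl]
  · simp [Nat.not_lt.mpr (Nat.le_of_lt h), Nat.not_lt.mpr (Nat.succ_le_of_lt h), Nat.ne_of_lt h]

theorem gray_step (k : ℕ) : gc k ^^^ gc (k + 1) = 2 ^ tz (k + 1) := by
  have h1 : gc k ^^^ gc (k + 1) = (k ^^^ (k + 1)) ^^^ ((k ^^^ (k + 1)) / 2) := by
    rw [xor_div_two]
    apply Nat.eq_of_testBit_eq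
    intro i
    simp only [gc, Nat.testBit_xor]
    cases k.testBit i <;> cases (k + 1).testBit i <;>
      cases (k / 2).testBit i <;> cases ((k + 1) / 2).testBit i <;> rfl
  rw [h1, xor_succ]
  have h2 : (2 ^ (tz (k + 1) + 1) - 1) / 2 = 2 ^ tz (k + 1) - 1 := by
    have : 2 ^ (tz (k + 1) + 1) = 2 * 2 ^ tz (k + 1) := by rw [pow_succ]; ring
    have h3 : 1 ≤ 2 ^ tz (k + 1) := Nat.one_le_two_pow
    omega
  rw [h2, pow_sub_one_xor]

theorem gc_lt {k n : ℕ} (h : k < 2 ^ n) : gc k < 2 ^ n :=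
  Nat.xor_lt_two_pow h (lt_of_le_of_lt (Nat.div_le_self k 2) h)

theorem gc_div_two (k : ℕ) : gc k / 2 = gc (k / 2) := by
  rw [gc, gc, xor_div_two, Nat.div_div_eq_div_mul]

theorem gc_inj : ∀ a b : ℕ, gc a = gc b → a = b := by
  intro a
  induction a using Nat.strong_induction_on with
  | _ a ih =>
    intro b hab
    rcases Nat.eq_zero_or_pos a with ha | ha
    · subst ha
      have : b ^^^ b / 2 = 0 := hab.symm
      have hb : b = b / 2 := by
        have := congrArg (· ^^^ (b / 2)) this
        simpa [Nat.xor_assoc] using this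
      omega
    · have hd : gc (a / 2) = gc (b / 2) := by
        rw [← gc_div_two, ← gc_div_two, hab]
      have h2 : a / 2 = b / 2 := ih (a / 2) (by omega) _ hd
      have h3 : a ^^^ b / 2 = b ^^^ b / 2 := by
        have h5 := hab
        unfold gc at h5
        rw [h2] at h5
        exact h5
      have h4 := congrArg (· ^^^ b / 2) h3
      simpa [Nat.xor_assoc] using h4

theorem aSeq_succ (p : ℕ) :
    aSeq (p + 3) = ((aSeq (p + 2)).map (· + 1)) ++ [1] ++ ((aSeq (p + 2)).map (· + 1)) := by
  rw [aSeq]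

theorem aSeq_length : ∀ n : ℕ, 1 ≤ n → (aSeq (n + 1)).length = 2 ^ n - 1 := by
  intro n
  induction n with
  | zero => omega
  | succ m ih =>
    intro _
    rcases Nat.eq_zero_or_pos m with hm | hm
    · subst hm; rfl
    · obtain ⟨p, rfl⟩ : ∃ p, m = p + 1 := ⟨m - 1, by omega⟩
      rw [show p + 1 + 1 + 1 = p + 3 by omega, aSeq_succ]
      simp only [List.length_append, List.length_map]
      rw [show p + 2 = (p + 1) + 1 by omega, ih (by omega)]
      have : 1 ≤ 2 ^ (p + 1) := Nat.one_le_two_pow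
      have h2 : 2 ^ (p + 1 + 1) = 2 * 2 ^ (p + 1) := by rw [pow_succ]; ring
      simp only [List.length_cons, List.length_nil]
      omega

theorem aSeq_getD : ∀ n : ℕ, 1 ≤ n → ∀ k : ℕ, k < 2 ^ n - 1 → ∀ d : ℕ,
    (aSeq (n + 1)).getD k d = n - tz (k + 1) := by
  intro n
  induction n with
  | zero => omega
  | succ m ih =>
    intro _ k hk d
    rcases Nat.eq_zero_or_pos m with hm | hm
    · subst hm
      interval_cases k
      rw [show (0:ℕ) + 1 = 1 from rfl, tz_odd rfl]
      rfl
    · obtain ⟨p, rfl⟩ : ∃ p, m = p + 1 := ⟨m - 1, by omega⟩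
      set n := p + 1 with hn
      have hlen : (aSeq (n + 1)).length = 2 ^ n - 1 := aSeq_length n (by omega)
      have hone : 1 ≤ 2 ^ n := Nat.one_le_two_pow
      have hpow : 2 ^ (n + 1) = 2 * 2 ^ n := by rw [pow_succ]; ring
      have heq := aSeq_succ p
      rw [show p + 3 = n + 1 + 1 by omega, show p + 2 = n + 1 by omega] at heq
      have hklen : k < (aSeq (n + 1 + 1)).length := by
        rw [heq]
        simp only [List.length_append, List.length_map, List.length_cons, List.length_nil, hlen]
        omega
      rw [List.getD_eq_getElem _ _ hklen]
      rcases lt_trichotomy k (2 ^ n - 1) with h1 | h1 | h1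
      · have hk1 : k < ((aSeq (n+1)).map (· + 1)).length := by simp [hlen]; omega
        have hk2 : k < (((aSeq (n+1)).map (· + 1)) ++ [1]).length := by
          simp [hlen]; omega
        have : (aSeq (n + 1 + 1))[k]'hklen
            = ((aSeq (n+1)).map (· + 1))[k]'hk1 := by
          simp only [heq]
          rw [List.getElem_append_left hk2, List.getElem_append_left hk1]
        rw [this, List.getElem_map, ← List.getD_eq_getElem _ d, ih (by omega) k h1 d]
        have htz := tz_lt (m := k + 1) (n := n) (by omega) (by omega)
        omega
      · have hk2 : k < (((aSeq (n+1)).map (· + 1)) ++ [1]).length := by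
          simp [hlen]; omega
        have hlen1 : ((aSeq (n+1)).map (· + 1)).length ≤ k := by simp [hlen]; omega
        have : (aSeq (n + 1 + 1))[k]'hklen = (1 : ℕ) := by
          simp only [heq]
          rw [List.getElem_append_left hk2, List.getElem_append_right hlen1]
          simp [hlen, h1]
        rw [this]
        have : k + 1 = 2 ^ n := by omega
        rw [this, tz_two_pow]
        omega
      · have hlen2 : (((aSeq (n+1)).map (· + 1)) ++ [1]).length ≤ k := by
          simp [hlen]; omega
        simp only [heq]
        rw [List.getElem_append_right hlen2, List.getElem_map]
        simp only [List.length_append, List.length_map, List.length_cons,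
          List.length_nil, hlen]
        have hk'lt : k - (2 ^ n - 1 + (0 + 1)) < (aSeq (n + 1)).length := by
          rw [hlen]; omega
        rw [← List.getD_eq_getElem _ d hk'lt,
          show k - (2 ^ n - 1 + (0 + 1)) = k - 2 ^ n from by omega,
          ih (by omega) _ (by omega) d]
        have htz1 : tz (k + 1) = tz (k - 2 ^ n + 1) := by
          rw [show k + 1 = 2 ^ n + (k - 2 ^ n + 1) from by omega]
          exact tz_two_pow_add (by omega) (by omega)
        have htz := tz_lt (m := k - 2 ^ n + 1) (n := n) (by omega) (by omega)
        omega

theorem ASeq_getD {n : ℕ} (hn : 1 ≤ n) {k : ℕ} (hk : k < 2 ^ n - 1) :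
    (ASeq (n + 1)).getD k 1 = n - tz (k + 1) := by
  rw [ASeq]
  have hlen : (aSeq (n + 1)).length = 2 ^ n - 1 := aSeq_length n hn
  have hk1 : k < (aSeq (n + 1)).length := by omega
  have hk2 : k < (aSeq (n + 1) ++ [1]).length := by simp; omega
  rw [List.getD_eq_getElem _ _ hk2, List.getElem_append_left hk1,
    ← List.getD_eq_getElem _ 1 hk1]
  exact aSeq_getD n hn k hk 1

theorem signV_eval (i : Fin 2) : signV i = if i.val = 1 then (-1 : ℝ) else 1 := by
  fin_cases i <;> simp [signV]

theorem vvec_eval {n m : ℕ} (hn : 1 ≤ n) (h1 : 1 ≤ m) (h2 : m ≤ n)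
    (j : Fin (2 ^ (n + 1 - 1))) :
    vvec (n + 1) m j = if (j : ℕ).testBit (n - m) then (-1 : ℝ) else 1 := by
  rw [vvec, dif_pos ⟨h1, by omega⟩]
  simp only [castV, kronV, onesV, one_mul, mul_one]
  rw [signV_eval]
  have hc : n + 1 - 1 - m = n - m := by omega
  rw [Nat.testBit_eq_decide_div_mod_eq]
  simp only [Fin.coe_cast, hc]
  by_cases hb : (j : ℕ) / 2 ^ (n - m) % 2 = 1
  · rw [if_pos hb, if_pos (by simpa using hb)]
  · rw [if_neg hb, if_neg (by simpa using hb)]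

theorem col_eval {n : ℕ} (hn : 1 ≤ n) (c : ℕ) (hc : c < 2 ^ n)
    (j : Fin (2 ^ (n + 1 - 1))) :
    ∏ k ∈ Finset.range c, vvec (n + 1) ((ASeq (n + 1)).getD k 1) j =
      ∏ q ∈ Finset.range n, (if (j : ℕ).testBit q && (gc c).testBit q then (-1 : ℝ) else 1) := by
  induction c with
  | zero =>
    simp [gc]
  | succ c ih =>
    have hone : 1 ≤ 2 ^ n := Nat.one_le_two_pow
    have hc' : c < 2 ^ n := by omega
    set t := tz (c + 1) with htdef
    have ht : t < n := tz_lt (by omega) (by omega)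
    have hA : (ASeq (n + 1)).getD c 1 = n - t := ASeq_getD hn (by omega)
    rw [Finset.prod_range_succ, ih hc', hA,
      vvec_eval hn (by omega) (by omega), show n - (n - t) = t from by omega]
    have hstep : gc (c + 1) = gc c ^^^ 2 ^ t := by
      have := gray_step c
      rw [← htdef] at this
      rw [← this, ← Nat.xor_assoc, Nat.xor_self, Nat.zero_xor]
    have hpoint : ∀ q ∈ Finset.range n,
        (if (j : ℕ).testBit q && (gc (c + 1)).testBit q then (-1 : ℝ) else 1) =
          (if (j : ℕ).testBit q && (gc c).testBit q then (-1 : ℝ) else 1) *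
            (if q = t then (if (j : ℕ).testBit t then (-1 : ℝ) else 1) else 1) := by
      intro q _
      rw [hstep, Nat.testBit_xor, Nat.testBit_two_pow]
      by_cases hq : q = t
      · rw [hq, if_pos rfl, decide_eq_true (Eq.refl t)]
        cases hbj : (j : ℕ).testBit t <;> cases hbg : (gc c).testBit t <;>
          simp [hbj, hbg]
      · rw [if_neg hq, decide_eq_false (fun h => hq h.symm)]
        cases hbg : (gc c).testBit q <;> simp
    rw [Finset.prod_congr rfl hpoint, Finset.prod_mul_distrib,
      Finset.prod_ite_eq' (Finset.range n) t
        (fun _ => (if (j : ℕ).testBit t then (-1 : ℝ) else 1)),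
      if_pos (Finset.mem_range.mpr ht)]

/-- Walsh function entry. -/
def W (n a x : ℕ) : ℝ :=
  ∏ q ∈ Finset.range n, (if a.testBit q && x.testBit q then (-1 : ℝ) else 1)

theorem sum_range_two_mul (m : ℕ) (f : ℕ → ℝ) :
    ∑ x ∈ Finset.range (2 * m), f x = ∑ y ∈ Finset.range m, (f (2 * y) + f (2 * y + 1)) := by
  induction m with
  | zero => simp
  | succ p ih =>
    rw [show 2 * (p + 1) = (2 * p + 1) + 1 from by ring, Finset.sum_range_succ,
      Finset.sum_range_succ, Finset.sum_range_succ, ih]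
    ring

theorem W_succ (n a x : ℕ) :
    W (n + 1) a x = (if a.testBit 0 && x.testBit 0 then (-1 : ℝ) else 1) * W n (a / 2) (x / 2) := by
  rw [W, Finset.prod_range_succ', W, mul_comm]
  congr 1
  apply Finset.prod_congr rfl
  intro q _
  rw [Nat.testBit_succ, Nat.testBit_succ]

theorem had (n : ℕ) : ∀ a b : ℕ, a < 2 ^ n → b < 2 ^ n →
    ∑ x ∈ Finset.range (2 ^ n), W n a x * W n b x = if a = b then (2 ^ n : ℝ) else 0 := by
  induction n with
  | zero =>
    intro a b ha hb
    interval_cases a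
    interval_cases b
    simp [W]
  | succ n ih =>
    intro a b ha hb
    rw [show (2 : ℕ) ^ (n + 1) = 2 * 2 ^ n from by rw [pow_succ]; ring, sum_range_two_mul]
    have hterm : ∀ y : ℕ,
        W (n + 1) a (2 * y) * W (n + 1) b (2 * y) +
          W (n + 1) a (2 * y + 1) * W (n + 1) b (2 * y + 1) =
          (1 + (if a.testBit 0 then (-1 : ℝ) else 1) * (if b.testBit 0 then (-1 : ℝ) else 1)) *
            (W n (a / 2) y * W n (b / 2) y) := by
      intro y
      rw [W_succ, W_succ, W_succ, W_succ]
      have e0 : (2 * y).testBit 0 = false := by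
        rw [Nat.testBit_zero]
        simp [Nat.mul_mod_right]
      have e1 : (2 * y + 1).testBit 0 = true := by
        rw [Nat.testBit_zero]
        simp [Nat.mul_add_mod]
      have e2 : 2 * y / 2 = y := by omega
      have e3 : (2 * y + 1) / 2 = y := by omega
      rw [e0, e1, e2, e3]
      simp only [Bool.and_false, Bool.and_true, if_neg Bool.false_ne_true]
      ring
    rw [Finset.sum_congr rfl (fun y _ => hterm y), ← Finset.mul_sum,
      ih (a / 2) (b / 2) (by omega) (by omega)]
    have hiff : a = b ↔ (a.testBit 0 = b.testBit 0 ∧ a / 2 = b / 2) := by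
      constructor
      · rintro rfl; exact ⟨rfl, rfl⟩
      · rintro ⟨hb0, hd⟩
        rw [Nat.testBit_zero, Nat.testBit_zero] at hb0
        have : a % 2 = b % 2 := by
          rcases Nat.mod_two_eq_zero_or_one a with h | h <;>
            rcases Nat.mod_two_eq_zero_or_one b with h' | h' <;> simp [h, h'] at hb0 ⊢
        omega
    by_cases h0 : a.testBit 0 = b.testBit 0
    · by_cases h1 : a / 2 = b / 2
      · rw [if_pos h1, if_pos (hiff.mpr ⟨h0, h1⟩), h0]
        have : (1 + (if b.testBit 0 then (-1 : ℝ) else 1) * (if b.testBit 0 then (-1 : ℝ) else 1)) = 2 := by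
          cases b.testBit 0 <;> norm_num
        rw [this, pow_succ]
        push_cast
        ring
      · rw [if_neg h1, if_neg (fun h => h1 (hiff.mp h).2)]
        ring
    · rw [if_neg (fun h => h0 (hiff.mp h).1)]
      have : (1 + (if a.testBit 0 then (-1 : ℝ) else 1) * (if b.testBit 0 then (-1 : ℝ) else 1)) = 0 := by
        cases ha0 : a.testBit 0 <;> cases hb0 : b.testBit 0 <;>
          first
          | (exfalso; rw [ha0, hb0] at h0; exact h0 rfl)
          | norm_num
      rw [this]
      ring

theorem rMat_eval {n : ℕ} (hn : 1 ≤ n) (j i : Fin (2 ^ (n + 1 - 1))) :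
    rMat (n + 1) j i = W n (j : ℕ) (gc (i : ℕ)) := by
  have hi : (i : ℕ) < 2 ^ n := by
    have := i.isLt
    simpa using this
  rw [rMat, col_eval hn (i : ℕ) hi j, W]

theorem rMat_orth {n : ℕ} (hn : 1 ≤ n) :
    rMat (n + 1) * (rMat (n + 1))ᵀ =
      ((2 : ℝ) ^ n) • (1 : Matrix (Fin (2 ^ (n + 1 - 1))) (Fin (2 ^ (n + 1 - 1))) ℝ) := by
  ext j j'
  rw [Matrix.mul_apply]
  simp only [Matrix.transpose_apply, Matrix.smul_apply, Matrix.one_apply]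
  have hsimp : (2 : ℕ) ^ (n + 1 - 1) = 2 ^ n := by norm_num
  have key : ∑ i : Fin (2 ^ (n + 1 - 1)), rMat (n + 1) j i * rMat (n + 1) j' i =
      ∑ i : Fin (2 ^ (n + 1 - 1)), W n (j : ℕ) (gc (i : ℕ)) * W n (j' : ℕ) (gc (i : ℕ)) := by
    apply Finset.sum_congr rfl
    intro i _
    rw [rMat_eval hn, rMat_eval hn]
  rw [key]
  have hbij : Function.Bijective (fun i : Fin (2 ^ (n + 1 - 1)) =>
      (⟨gc (i : ℕ), by
        have := i.isLt
        exact gc_lt this⟩ : Fin (2 ^ (n + 1 - 1)))) := by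
    rw [Finite.injective_iff_bijective.symm]
    exact fun a b h => Fin.ext (gc_inj _ _ (congrArg Fin.val h))
  have hre := Function.Bijective.sum_comp hbij
    (fun x : Fin (2 ^ (n + 1 - 1)) => W n (j : ℕ) (x : ℕ) * W n (j' : ℕ) (x : ℕ))
  simp only at hre
  rw [show (∑ i : Fin (2 ^ (n + 1 - 1)), W n (j : ℕ) (gc (i : ℕ)) * W n (j' : ℕ) (gc (i : ℕ)))
      = ∑ x : Fin (2 ^ (n + 1 - 1)), W n (j : ℕ) (x : ℕ) * W n (j' : ℕ) (x : ℕ) from hre]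
  rw [Fin.sum_univ_eq_sum_range (fun x => W n (j : ℕ) x * W n (j' : ℕ) x)]
  have hj : (j : ℕ) < 2 ^ n := by have := j.isLt; simpa using this
  have hj' : (j' : ℕ) < 2 ^ n := by have := j'.isLt; simpa using this
  rw [show Finset.range (2 ^ (n + 1 - 1)) = Finset.range (2 ^ n) from by norm_num,
    had n (j : ℕ) (j' : ℕ) hj hj']
  by_cases h : j = j'
  · rw [if_pos (by rw [h]), if_pos h, smul_eq_mul, mul_one]
  · rw [if_neg (fun hv => h (Fin.ext hv)), if_neg h, smul_zero]

theorem stmt8 (n : ℕ) (hn : 1 ≤ n) :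
    IsUnit (rMat (n + 1)) ∧
    (rMat (n + 1))⁻¹ = ((2 : ℝ) ^ n)⁻¹ • (rMat (n + 1))ᵀ ∧
    rMat (n + 1) * (rMat (n + 1))ᵀ =
      ((2 : ℝ) ^ n) • (1 : Matrix (Fin (2 ^ n)) (Fin (2 ^ n)) ℝ) := by
  have horth := rMat_orth hn
  have hpow : ((2 : ℝ) ^ n) ≠ 0 := by positivity
  have hinv : rMat (n + 1) * (((2 : ℝ) ^ n)⁻¹ • (rMat (n + 1))ᵀ) = 1 := by
    rw [Matrix.mul_smul, horth, smul_smul, inv_mul_cancel₀ hpow, one_smul]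
  refine ⟨?_, ?_, horth⟩
  · exact (Matrix.isUnit_iff_isUnit_det _).mpr (Matrix.isUnit_det_of_right_inverse hinv)
  · exact Matrix.inv_eq_right_inv hinv

end
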